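/- For simple digraphs Γ₁ and Γ₂, th(Γ₁ ∪ Γ₂) = th(Γ₁ᵀ ∪ Γ₂), where ∪ denotes disjoint union and Γ₁ᵀ is the transpose of Γ₁. -/
import Mathlib


open Set

/-- One time step of standard zero forcing on a digraph with arc relation `A`:
every blue vertex having a unique white out-neighbor forces it blue. -/
def dstep {V : Type*} (A : V → V → Prop) (S : Set V) : Set V :=
  S ∪ {w | ∃ u ∈ S, A u w ∧ ∀ x, A u x → x ∉ S → x = w}

/-- `B` is a zero forcing set of the digraph with arc relation `A`. -/
def IsZFS {V : Type*} (A : V → V → Prop) (B : Set V) : Prop :=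
  ∃ t, (dstep A)^[t] B = Set.univ

/-- Propagation time of `B` in the digraph with arc relation `A`. -/
noncomputable def dpt {V : Type*} (A : V → V → Prop) (B : Set V) : ℕ :=
  sInf {t | (dstep A)^[t] B = Set.univ}

/-- The throttling number of the digraph with arc relation `A`. -/
noncomputable def dth {V : Type*} (A : V → V → Prop) : ℕ :=
  sInf {k | ∃ B : Set V, IsZFS A B ∧ k = B.ncard + dpt A B}

/-- The disjoint union of two digraphs. -/
def dUnion {V₁ V₂ : Type*} (A₁ : V₁ → V₁ → Prop) (A₂ : V₂ → V₂ → Prop) :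
    V₁ ⊕ V₂ → V₁ ⊕ V₂ → Prop
  | .inl a, .inl b => A₁ a b
  | .inr a, .inr b => A₂ a b
  | _, _ => False

lemma subset_dstep {V : Type*} (A : V → V → Prop) (S : Set V) : S ⊆ dstep A S :=
  Set.subset_union_left

lemma dstep_mono {V : Type*} (A : V → V → Prop) {S T : Set V} (h : S ⊆ T) :
    dstep A S ⊆ dstep A T := by
  rintro w (hw | ⟨u, hu, hA, hf⟩)
  · exact Or.inl (h hw)
  · exact Or.inr ⟨u, h hu, hA, fun x hx hxT => hf x hx (fun hxS => hxT (h hxS))⟩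

lemma iterate_dstep_mono {V : Type*} (A : V → V → Prop) {S T : Set V} (h : S ⊆ T) (n : ℕ) :
    (dstep A)^[n] S ⊆ (dstep A)^[n] T := by
  induction n with
  | zero => exact h
  | succ n ih =>
      rw [Function.iterate_succ_apply', Function.iterate_succ_apply']
      exact dstep_mono A ih

lemma iterate_dstep_le {V : Type*} (A : V → V → Prop) (S : Set V) {m n : ℕ} (h : m ≤ n) :
    (dstep A)^[m] S ⊆ (dstep A)^[n] S := by
  induction n with
  | zero => simpa [Nat.le_zero.mp h]
  | succ n ih =>
      rcases Nat.lt_or_ge m (n+1) with hm | hm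
      · rw [Function.iterate_succ_apply']
        exact (ih (Nat.lt_succ_iff.mp hm)).trans (subset_dstep A _)
      · have : m = n + 1 := le_antisymm h hm
        subst this; exact subset_refl _

/-- The reversal lemma: from a set forcing `A` in `t` steps, produce a set of the
same cardinality forcing `flip A` in `t` steps. -/
lemma rev_main {V : Type*} [Fintype V] (A : V → V → Prop) (B : Set V) (t : ℕ)
    (hB : (dstep A)^[t] B = Set.univ) :
    ∃ B' : Set V, (dstep (flip A))^[t] B' = Set.univ ∧ B'.ncard = B.ncard := by
  classical
  set S : ℕ → Set V := fun i => (dstep A)^[i] B with hS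
  have hSmono : ∀ {i j : ℕ}, i ≤ j → S i ⊆ S j := fun h => iterate_dstep_le A B h
  have hSt : ∀ w, w ∈ S t := by intro w; rw [hS]; simp only; rw [hB]; trivial
  set d : V → ℕ := fun w => sInf {i | w ∈ S i} with hd
  have hdnonempty : ∀ w, {i | w ∈ S i}.Nonempty := fun w => ⟨t, hSt w⟩
  have hdmem : ∀ w, w ∈ S (d w) := fun w => Nat.sInf_mem (hdnonempty w)
  have hdle : ∀ w, d w ≤ t := fun w => Nat.sInf_le (hSt w)
  have hdgt : ∀ w i, w ∉ S i → i < d w := by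
    intro w i h
    by_contra hle
    exact h (hSmono (Nat.le_of_not_lt hle) (hdmem w))
  have hdpos : ∀ w, w ∉ B → 1 ≤ d w := by
    intro w hw
    have : w ∉ S 0 := hw
    exact hdgt w 0 this
  have hnot : ∀ w, w ∉ B → w ∉ S (d w - 1) := by
    intro w hw
    exact Nat.notMem_of_lt_sInf (Nat.sub_lt (hdpos w hw) Nat.one_pos)
  have hex : ∀ w, ∃ u, w ∉ B →
      u ∈ S (d w - 1) ∧ A u w ∧ ∀ x, A u x → x ∉ S (d w - 1) → x = w := by
    intro w
    by_cases hw : w ∈ B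
    · exact ⟨w, fun h => absurd hw h⟩
    · have h1 : w ∈ S (d w) := hdmem w
      have heq : S (d w) = dstep A (S (d w - 1)) := by
        conv_lhs => rw [show d w = (d w - 1) + 1 from
          (Nat.succ_pred_eq_of_pos (hdpos w hw)).symm]
        rw [hS]; simp only
        rw [Function.iterate_succ_apply']
      rw [heq] at h1
      rcases h1 with h1 | ⟨u, hu, hA, hf⟩
      · exact absurd h1 (hnot w hw)
      · exact ⟨u, fun _ => ⟨hu, hA, hf⟩⟩
  set u : V → V := fun w => (hex w).choose with hu
  have hspec : ∀ w, w ∉ B →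
      u w ∈ S (d w - 1) ∧ A (u w) w ∧ ∀ x, A (u w) x → x ∉ S (d w - 1) → x = w :=
    fun w hw => (hex w).choose_spec hw
  -- injectivity of the forcer assignment
  have hinj : ∀ w, w ∉ B → ∀ w', w' ∉ B → u w = u w' → w = w' := by
    intro w hw w' hw' huw
    rcases Nat.le_total (d w) (d w') with hle | hle
    · have h1 := (hspec w hw).2.2 w' (huw ▸ (hspec w' hw').2.1)
      have : w' ∉ S (d w - 1) := fun h =>
        hnot w' hw' (hSmono (Nat.sub_le_sub_right hle 1) h) |>.elim
      · exact (h1 this).symm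
    · have h1 := (hspec w' hw').2.2 w (huw ▸ (hspec w hw).2.1)
      have : w ∉ S (d w' - 1) := fun h =>
        hnot w hw (hSmono (Nat.sub_le_sub_right hle 1) h) |>.elim
      · exact h1 this
  set B' : Set V := {v | ∀ w, w ∉ B → u w ≠ v} with hB'
  -- cardinality
  have hcompl : B'ᶜ = u '' Bᶜ := by
    ext v
    simp only [hB', mem_compl_iff, mem_setOf_eq, not_forall, mem_image]
    constructor
    · rintro ⟨w, hw, hww⟩
      exact ⟨w, hw, not_not.mp hww⟩
    · rintro ⟨w, hw, rfl⟩
      exact ⟨w, hw, not_not_intro rfl⟩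
  have hcard : B'.ncard = B.ncard := by
    have h1 : B'.ncard + B'ᶜ.ncard = Nat.card V := Set.ncard_add_ncard_compl B'
    have h2 : B.ncard + Bᶜ.ncard = Nat.card V := Set.ncard_add_ncard_compl B
    have h3 : B'ᶜ.ncard = Bᶜ.ncard := by
      rw [hcompl]
      exact Set.ncard_image_of_injOn (fun a ha b hb h => hinj a ha b hb h)
    omega
  -- the reversed process
  set T : ℕ → Set V := fun r => {v | ∀ w, w ∉ B → u w = v → t - r < d w} with hT
  have hT0 : T 0 ⊆ B' := by
    intro v hv w hw huw
    have := hv w hw huw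
    have := hdle w
    omega
  have hTt : ∀ v, v ∈ T t := by
    intro v w hw _
    have := hdpos w hw
    omega
  have hkey : ∀ r, T (r+1) ⊆ dstep (flip A) (T r) := by
    intro r v hv
    by_cases hvT : v ∈ T r
    · exact Or.inl hvT
    · simp only [hT, mem_setOf_eq, not_forall] at hvT
      obtain ⟨w, hw, huw, hle⟩ := hvT
      have hle' : d w ≤ t - r := Nat.le_of_not_lt hle
      have hgt : t - (r + 1) < d w := hv w hw huw
      have hdpw := hdpos w hw
      have hsw : d w = t - r := by omega
      -- w is blue in T r
      have hwT : w ∈ T r := by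
        intro w'' hw'' huw''
        have hmem : u w'' ∈ S (d w'' - 1) := (hspec w'' hw'').1
        rw [huw''] at hmem
        have hwnot : w ∉ S (d w - 1) := hnot w hw
        have : ¬ (d w'' - 1 ≤ d w - 1) := fun h => hwnot (hSmono h hmem)
        have := hdpos w'' hw''
        omega
      refine Or.inr ⟨w, hwT, ?_, ?_⟩
      · show A v w
        exact huw ▸ (hspec w hw).2.1
      · intro x hx hxT
        show x = v
        simp only [hT, mem_setOf_eq, not_forall] at hxT
        obtain ⟨w'', hw'', huw'', hle''⟩ := hxT
        have hle''' : d w'' ≤ t - r := Nat.le_of_not_lt hle''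
        have hmem : x ∈ S (d w'' - 1) := huw'' ▸ (hspec w'' hw'').1
        have hf := (hspec w'' hw'').2.2
        rw [huw''] at hf
        have hwnot : w ∉ S (d w'' - 1) := by
          intro h
          exact hnot w hw (hSmono (by omega) h)
        have : w = w'' := hf w hx hwnot
        rw [← huw, this, huw'']
  have hiter : ∀ r, T r ⊆ (dstep (flip A))^[r] B' := by
    intro r
    induction r with
    | zero => exact hT0
    | succ r ih =>
        rw [Function.iterate_succ_apply']
        exact (hkey r).trans (dstep_mono (flip A) ih)
  refine ⟨B', ?_, hcard⟩
  apply Set.eq_univ_of_univ_subset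
  intro v _
  exact hiter t (hTt v)

/-- Component decomposition of one forcing step on a disjoint union (left). -/
lemma dstep_dUnion_inl {V₁ V₂ : Type*} (A₁ : V₁ → V₁ → Prop) (A₂ : V₂ → V₂ → Prop)
    (S : Set (V₁ ⊕ V₂)) :
    Sum.inl ⁻¹' (dstep (dUnion A₁ A₂) S) = dstep A₁ (Sum.inl ⁻¹' S) := by
  ext x
  constructor
  · rintro (h | ⟨u, hu, hA, hf⟩)
    · exact Or.inl h
    · cases u with
      | inl a =>
          refine Or.inr ⟨a, hu, hA, fun y hy hyS => ?_⟩
          have := hf (Sum.inl y) hy hyS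
          exact Sum.inl.inj this
      | inr a => exact absurd hA id
  · rintro (h | ⟨a, ha, hA, hf⟩)
    · exact Or.inl h
    · refine Or.inr ⟨Sum.inl a, ha, hA, ?_⟩
      rintro (y | y) hy hyS
      · exact congrArg Sum.inl (hf y hy hyS)
      · exact absurd hy id

/-- Component decomposition of one forcing step on a disjoint union (right). -/
lemma dstep_dUnion_inr {V₁ V₂ : Type*} (A₁ : V₁ → V₁ → Prop) (A₂ : V₂ → V₂ → Prop)
    (S : Set (V₁ ⊕ V₂)) :
    Sum.inr ⁻¹' (dstep (dUnion A₁ A₂) S) = dstep A₂ (Sum.inr ⁻¹' S) := by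
  ext x
  constructor
  · rintro (h | ⟨u, hu, hA, hf⟩)
    · exact Or.inl h
    · cases u with
      | inr a =>
          refine Or.inr ⟨a, hu, hA, fun y hy hyS => ?_⟩
          have := hf (Sum.inr y) hy hyS
          exact Sum.inr.inj this
      | inl a => exact absurd hA id
  · rintro (h | ⟨a, ha, hA, hf⟩)
    · exact Or.inl h
    · refine Or.inr ⟨Sum.inr a, ha, hA, ?_⟩
      rintro (y | y) hy hyS
      · exact absurd hy id
      · exact congrArg Sum.inr (hf y hy hyS)

lemma iterate_dUnion_inl {V₁ V₂ : Type*} (A₁ : V₁ → V₁ → Prop) (A₂ : V₂ → V₂ → Prop)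
    (S : Set (V₁ ⊕ V₂)) (n : ℕ) :
    Sum.inl ⁻¹' ((dstep (dUnion A₁ A₂))^[n] S) = (dstep A₁)^[n] (Sum.inl ⁻¹' S) := by
  induction n with
  | zero => rfl
  | succ n ih =>
      rw [Function.iterate_succ_apply', Function.iterate_succ_apply',
        dstep_dUnion_inl, ih]

lemma iterate_dUnion_inr {V₁ V₂ : Type*} (A₁ : V₁ → V₁ → Prop) (A₂ : V₂ → V₂ → Prop)
    (S : Set (V₁ ⊕ V₂)) (n : ℕ) :
    Sum.inr ⁻¹' ((dstep (dUnion A₁ A₂))^[n] S) = (dstep A₂)^[n] (Sum.inr ⁻¹' S) := by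
  induction n with
  | zero => rfl
  | succ n ih =>
      rw [Function.iterate_succ_apply', Function.iterate_succ_apply',
        dstep_dUnion_inr, ih]

lemma sum_set_eq_univ {V₁ V₂ : Type*} {S : Set (V₁ ⊕ V₂)}
    (h1 : Sum.inl ⁻¹' S = Set.univ) (h2 : Sum.inr ⁻¹' S = Set.univ) : S = Set.univ := by
  apply Set.eq_univ_of_forall
  rintro (x | x)
  · exact (Set.eq_univ_iff_forall.mp h1) x
  · exact (Set.eq_univ_iff_forall.mp h2) x

lemma sum_ncard {V₁ V₂ : Type*} [Fintype V₁] [Fintype V₂] (B : Set (V₁ ⊕ V₂)) :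
    B.ncard = (Sum.inl ⁻¹' B).ncard + (Sum.inr ⁻¹' B).ncard := by
  have hrw : B = Sum.inl '' (Sum.inl ⁻¹' B) ∪ Sum.inr '' (Sum.inr ⁻¹' B) := by
    ext z
    cases z <;> simp
  have hdisj : Disjoint (Sum.inl '' (Sum.inl ⁻¹' B) : Set (V₁ ⊕ V₂))
      (Sum.inr '' (Sum.inr ⁻¹' B)) := by
    rw [Set.disjoint_left]
    rintro z ⟨a, _, rfl⟩ ⟨b, _, hb⟩
    exact Sum.inl_ne_inr hb.symm
  conv_lhs => rw [hrw]
  rw [Set.ncard_union_eq hdisj (Set.toFinite _) (Set.toFinite _),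
    Set.ncard_image_of_injective _ Sum.inl_injective,
    Set.ncard_image_of_injective _ Sum.inr_injective]

lemma dth_union_le {V₁ V₂ : Type*} [Fintype V₁] [Fintype V₂]
    (A₁ : V₁ → V₁ → Prop) (A₂ : V₂ → V₂ → Prop) :
    dth (dUnion (flip A₁) A₂) ≤ dth (dUnion A₁ A₂) := by
  classical
  have hne : {k | ∃ B : Set (V₁ ⊕ V₂), IsZFS (dUnion A₁ A₂) B ∧
      k = B.ncard + dpt (dUnion A₁ A₂) B}.Nonempty :=
    ⟨(Set.univ : Set (V₁ ⊕ V₂)).ncard + dpt (dUnion A₁ A₂) Set.univ,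
      Set.univ, ⟨0, rfl⟩, rfl⟩
  have hmem := Nat.sInf_mem hne
  obtain ⟨B, hZFS, hk⟩ := hmem
  obtain ⟨t0, ht0⟩ := hZFS
  have hptne : {s | (dstep (dUnion A₁ A₂))^[s] B = Set.univ}.Nonempty := ⟨t0, ht0⟩
  set p := dpt (dUnion A₁ A₂) B with hp
  have hpforce : (dstep (dUnion A₁ A₂))^[p] B = Set.univ := Nat.sInf_mem hptne
  -- component decomposition
  have h1 : (dstep A₁)^[p] (Sum.inl ⁻¹' B) = Set.univ := by
    rw [← iterate_dUnion_inl A₁ A₂ B p, hpforce]; rfl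
  have h2 : (dstep A₂)^[p] (Sum.inr ⁻¹' B) = Set.univ := by
    rw [← iterate_dUnion_inr A₁ A₂ B p, hpforce]; rfl
  obtain ⟨B₁', hB₁'force, hB₁'card⟩ := rev_main A₁ (Sum.inl ⁻¹' B) p h1
  set B'' : Set (V₁ ⊕ V₂) := Sum.inl '' B₁' ∪ Sum.inr '' (Sum.inr ⁻¹' B) with hB''
  have hpre1 : Sum.inl ⁻¹' B'' = B₁' := by
    rw [hB'']
    ext x
    simp [Set.mem_preimage, Set.mem_union, Set.mem_image]
  have hpre2 : Sum.inr ⁻¹' B'' = Sum.inr ⁻¹' B := by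
    rw [hB'']
    ext x
    simp [Set.mem_preimage, Set.mem_union, Set.mem_image]
  have hforce'' : (dstep (dUnion (flip A₁) A₂))^[p] B'' = Set.univ := by
    apply sum_set_eq_univ
    · rw [iterate_dUnion_inl, hpre1]; exact hB₁'force
    · rw [iterate_dUnion_inr, hpre2]; exact h2
  have hZFS'' : IsZFS (dUnion (flip A₁) A₂) B'' := ⟨p, hforce''⟩
  have hpt'' : dpt (dUnion (flip A₁) A₂) B'' ≤ p := Nat.sInf_le hforce''
  have hcard'' : B''.ncard = B.ncard := by
    rw [sum_ncard B'', hpre1, hpre2, hB₁'card, sum_ncard B]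
  have hmem'' : B''.ncard + dpt (dUnion (flip A₁) A₂) B'' ∈
      {k | ∃ B : Set (V₁ ⊕ V₂), IsZFS (dUnion (flip A₁) A₂) B ∧
        k = B.ncard + dpt (dUnion (flip A₁) A₂) B} := ⟨B'', hZFS'', rfl⟩
  calc dth (dUnion (flip A₁) A₂) ≤ B''.ncard + dpt (dUnion (flip A₁) A₂) B'' :=
        Nat.sInf_le hmem''
    _ ≤ B.ncard + p := by omega
    _ = dth (dUnion A₁ A₂) := hk.symm


/-- Transposing one component of a disjoint union does not change the throttling number. -/
theorem stmt5 {V₁ V₂ : Type*} [Fintype V₁] [Fintype V₂]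
    (A₁ : V₁ → V₁ → Prop) (A₂ : V₂ → V₂ → Prop)
    (h₁ : Irreflexive A₁) (h₂ : Irreflexive A₂) :
    dth (dUnion A₁ A₂) = dth (dUnion (flip A₁) A₂) := by
  refine le_antisymm ?_ (dth_union_le A₁ A₂)
  have := dth_union_le (flip A₁) A₂
  have hff : flip (flip A₁) = A₁ := rfl
  rwa [hff] at this
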